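/- arXiv:2509.04750 — 2 statements merged into one kernel-verified Lean document; each statement's English description precedes it below -/
import Mathlib

section
/- If σ ≤ (1 - r̲)/(2r̲), then for every θ ∈ ℝ the policymaker's ex post welfare U(θ; θ̲) in the signaling equilibrium is nonincreasing in θ̲ (equivalently, nonincreasing in the intervention level r'), and it is strictly decreasing for θ in the intervention region [θ̲, θ̄). -/
set_option maxHeartbeats 2000000 in
/-- If `σ ≤ (1-r̲)/(2r̲)`, the policymaker's ex post welfare is nonincreasing in the
lower threshold `θ̲` for every `θ`, and strictly decreasing for `θ` in the
intervention region. -/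
theorem stmt_10 (rl σ : ℝ) (h0 : 0 < rl) (h1 : rl < 1) (hσ : 0 < σ)
    (hσle : σ ≤ (1 - rl) / (2 * rl))
    (U : ℝ → ℝ → ℝ)
    (hU : U = fun tl θ =>
      if θ < tl then 0
      else if θ < 2 * σ + (1 - 2 * σ / (1 - rl)) * tl then θ - tl
      else if θ < 2 * σ + (1 - 2 * σ * rl / (1 - rl)) * tl then
        (1 + 1 / (2 * σ)) * θ - (1 / (2 * σ) - rl / (1 - rl)) * tl - 1
      else θ) :
    ∀ tl₁ tl₂, tl₁ ∈ Set.Icc (0 : ℝ) (1 - rl) → tl₂ ∈ Set.Icc (0 : ℝ) (1 - rl) →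
      tl₁ < tl₂ →
      (∀ θ : ℝ, U tl₂ θ ≤ U tl₁ θ) ∧
      (∀ θ : ℝ, tl₂ ≤ θ → θ < 2 * σ + (1 - 2 * σ / (1 - rl)) * tl₂ →
        U tl₂ θ < U tl₁ θ) := by
  subst hU
  rintro t1 t2 ⟨h1a, h1b⟩ ⟨h2a, h2b⟩ hlt
  have hr : (0:ℝ) < 1 - rl := by linarith
  have hs : (0:ℝ) < 2 * σ := by linarith
  have hkey : 2 * σ * rl ≤ 1 - rl := by
    rw [le_div_iff₀ (by positivity)] at hσle; nlinarith
  set u : ℝ := (2*σ)⁻¹ with hudef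
  set v : ℝ := (1-rl)⁻¹ with hvdef
  have hu : 2 * σ * u = 1 := mul_inv_cancel₀ (ne_of_gt hs)
  have hv : (1 - rl) * v = 1 := mul_inv_cancel₀ (ne_of_gt hr)
  have hu0 : 0 < u := by positivity
  have hv0 : 0 < v := by positivity
  have e1 : 2 * σ / (1 - rl) = 2 * σ * v := by rw [div_eq_mul_inv]
  have e2 : 2 * σ * rl / (1 - rl) = 2 * σ * rl * v := by rw [div_eq_mul_inv]
  have e3 : (1:ℝ) / (2 * σ) = u := by rw [one_div]
  have e4 : rl / (1 - rl) = rl * v := by rw [div_eq_mul_inv]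
  have huv : rl * v ≤ u := by nlinarith
  constructor
  · intro θ
    simp only [e1, e2, e3, e4]
    split_ifs <;> nlinarith [mul_pos hu0 hv0, mul_nonneg h1a hv0.le, mul_nonneg h2a hv0.le, mul_nonneg h1a hu0.le, mul_nonneg h2a hu0.le, mul_nonneg (sub_nonneg.mpr hlt.le) (sub_nonneg.mpr huv), mul_le_mul_of_nonneg_right h2b hv0.le, mul_le_mul_of_nonneg_right h1b hv0.le]
  · intro θ hθ1 hθ2
    simp only [e1, e2, e3, e4] at hθ2 ⊢
    split_ifs <;> nlinarith [mul_pos hu0 hv0, mul_nonneg h1a hv0.le, mul_nonneg h2a hv0.le, mul_nonneg h1a hu0.le, mul_nonneg h2a hu0.le, mul_nonneg (sub_nonneg.mpr hlt.le) (sub_nonneg.mpr huv), mul_le_mul_of_nonneg_right h2b hv0.le, mul_le_mul_of_nonneg_right h1b hv0.le, mul_pos (sub_pos.mpr hlt) hv0, mul_pos (sub_pos.mpr hlt) hu0]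
end

section
/- If σ > (1 - r̲)/(2r̲), then for θ̲₁ < θ̲₂ in [0, 1-r̲] and any θ with θ̄(θ̲₁) ≤ θ and θ < θ'(θ̲₂), the welfare satisfies U(θ; θ̲₂) > U(θ; θ̲₁); i.e., a more aggressive intervention strictly benefits the policymaker on the overlapping partial-attack region. -/
/-- If `σ > (1-r̲)/(2r̲)`, a more aggressive intervention strictly raises welfare on
the overlapping partial-attack region: for `θ̲₁ < θ̲₂` and `θ̄(θ̲₁) ≤ θ < θ'(θ̲₂)`,
`U(θ; θ̲₂) > U(θ; θ̲₁)`. -/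
theorem stmt_11 (rl σ : ℝ) (h0 : 0 < rl) (h1 : rl < 1) (hσ : 0 < σ)
    (hσgt : σ > (1 - rl) / (2 * rl))
    (U : ℝ → ℝ → ℝ)
    (hU : U = fun tl θ =>
      if θ < tl then 0
      else if θ < 2 * σ + (1 - 2 * σ / (1 - rl)) * tl then θ - tl
      else if θ < 2 * σ + (1 - 2 * σ * rl / (1 - rl)) * tl then
        (1 + 1 / (2 * σ)) * θ - (1 / (2 * σ) - rl / (1 - rl)) * tl - 1
      else θ) :
    ∀ tl₁ tl₂, tl₁ ∈ Set.Icc (0 : ℝ) (1 - rl) → tl₂ ∈ Set.Icc (0 : ℝ) (1 - rl) →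
      tl₁ < tl₂ →
      2 * σ + (1 - 2 * σ / (1 - rl)) * tl₁ ≤
        2 * σ + (1 - 2 * σ * rl / (1 - rl)) * tl₂ →
      ∀ θ : ℝ, 2 * σ + (1 - 2 * σ / (1 - rl)) * tl₁ ≤ θ →
        θ < 2 * σ + (1 - 2 * σ * rl / (1 - rl)) * tl₂ →
        U tl₁ θ < U tl₂ θ := by
  subst hU
  intro tl₁ tl₂ h₁ h₂ hlt hle θ hθ1 hθ2
  obtain ⟨h10, h11⟩ := h₁
  obtain ⟨h20, h21⟩ := h₂
  have hr1 : (0:ℝ) < 1 - rl := by linarith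
  have hσrl : 1 - rl < 2 * σ * rl := by
    rw [gt_iff_lt, div_lt_iff₀ (by linarith)] at hσgt
    linarith
  have hA : 2 * σ / (1 - rl) * (1 - rl) = 2 * σ := div_mul_cancel₀ _ (ne_of_gt hr1)
  have hB : 2 * σ * rl / (1 - rl) * (1 - rl) = 2 * σ * rl := div_mul_cancel₀ _ (ne_of_gt hr1)
  set A := 2 * σ / (1 - rl) with hAdef
  set B := 2 * σ * rl / (1 - rl) with hBdef
  have hB1 : 1 < B := by nlinarith
  have hAB : B < A := by nlinarith
  have hA1 : 1 < A := lt_trans hB1 hAB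
  have hApos : 0 < A := by linarith
  have hc : 1 / (2 * σ) < rl / (1 - rl) := by
    rw [div_lt_div_iff₀ (by linarith) hr1]
    nlinarith
  have h1a : ¬ θ < tl₁ := not_lt.2 (by nlinarith [mul_nonneg hApos.le (sub_nonneg.2 h11)])
  have h1b : ¬ θ < 2 * σ + (1 - A) * tl₁ := not_lt.2 hθ1
  have h1c : θ < 2 * σ + (1 - B) * tl₁ := by nlinarith
  have h2a : ¬ θ < tl₂ := not_lt.2 (by nlinarith [mul_nonneg hApos.le (sub_nonneg.2 h21)])
  have h2b : ¬ θ < 2 * σ + (1 - A) * tl₂ := not_lt.2 (by nlinarith)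
  simp only [h1a, h1b, h1c, h2a, h2b, hθ2, if_true, if_false, ite_true, ite_false]
  nlinarith [mul_pos (by linarith : (0:ℝ) < rl / (1 - rl) - 1 / (2 * σ)) (by linarith : (0:ℝ) < tl₂ - tl₁)]
end
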